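/- (One-step decrease, regime p8.) Let f1 ∈ F_{μ1,L1} and f2 ∈ F_{μ2,L2} with L2 > μ2 > L1 > 0, μ1 < L1, μ1 + μ2 > 0, and μ1/μ2 + 1 + μ1/L1 ≥ 0 (i.e., μ1·(1/μ1 + 1/μ2 + 1/L1) ≥ 0). Let F := f1 − f2 and consider a DCA step from x to x⁺ with g2 ∈ ∂f2(x), g1⁺ ∈ ∂f1(x⁺), g1⁺ = g2, and let g1 ∈ ∂f1(x). Then F(x) − F(x⁺) ≥ ((L1 + μ2)/L1²)·(1/2)‖g1 − g2‖². -/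

import Mathlib

open RealInnerProductSpace

variable {H : Type*} [NormedAddCommGroup H] [InnerProductSpace ℝ H]

/-- `f` has lower curvature `μ`, i.e. `f - (μ/2)‖·‖²` is convex. -/
def HasLowerCurvature (μ : ℝ) (f : H → ℝ) : Prop :=
  ConvexOn ℝ Set.univ fun x => f x - μ / 2 * ‖x‖ ^ 2

/-- `f` has upper curvature `L`, i.e. `(L/2)‖·‖² - f` is convex. -/
def HasUpperCurvature (L : ℝ) (f : H → ℝ) : Prop :=
  ConvexOn ℝ Set.univ fun x => L / 2 * ‖x‖ ^ 2 - f x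

/-- `g` is a subgradient of `f` (of lower curvature `μ`) at `x`. -/
def IsSubgradient (μ : ℝ) (f : H → ℝ) (x g : H) : Prop :=
  ∀ y, f y ≥ f x + ⟪g, y - x⟫ + μ / 2 * ‖y - x‖ ^ 2


lemma upper_bound {μ L : ℝ} (hμL : μ < L) {f : H → ℝ} (hup : HasUpperCurvature L f)
    {x g : H} (hg : IsSubgradient μ f x g) (y : H) :
    f y ≤ f x + ⟪g, y - x⟫ + L / 2 * ‖y - x‖ ^ 2 := by
  have key : ∀ t : ℝ, 0 < t → t ≤ 1 →
      f y ≤ f x + ⟪g, y - x⟫ + L / 2 * ‖y - x‖ ^ 2 + t * ((L - μ) / 2 * ‖y - x‖ ^ 2) := by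
    intro t ht ht1
    have h1t : (0:ℝ) < 1 + t := by linarith
    set w : H := x - t • (y - x) with hw
    have ha : (0:ℝ) ≤ 1/(1+t) := by positivity
    have hb : (0:ℝ) ≤ t/(1+t) := by positivity
    have hab : 1/(1+t) + t/(1+t) = 1 := by field_simp
    have hconv := hup.2 (Set.mem_univ w) (Set.mem_univ y) ha hb hab
    have hcomb : (1/(1+t)) • w + (t/(1+t)) • y = x := by
      rw [hw]; match_scalars <;> field_simp <;> ring
    rw [hcomb] at hconv
    have hfw := hg w
    have hwx : w - x = -(t • (y - x)) := by rw [hw]; abel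
    have e1 : ⟪g, w - x⟫ = -(t * ⟪g, y - x⟫) := by
      rw [hwx, inner_neg_right, real_inner_smul_right]
    have e2 : ‖w - x‖ ^ 2 = t^2 * ‖y - x‖ ^ 2 := by
      rw [hwx, norm_neg, norm_smul, mul_pow, Real.norm_eq_abs, sq_abs]
    have e3 : ‖w‖ ^ 2 = ‖x‖ ^ 2 - 2 * t * ⟪x, y - x⟫ + t^2 * ‖y - x‖ ^ 2 := by
      rw [hw, norm_sub_sq_real, real_inner_smul_right, norm_smul, mul_pow,
        Real.norm_eq_abs, sq_abs]; ring
    have e4 : ‖y‖ ^ 2 = ‖x‖ ^ 2 + 2 * ⟪x, y - x⟫ + ‖y - x‖ ^ 2 := by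
      have h := norm_add_sq_real x (y - x)
      rw [show x + (y - x) = y from by abel] at h
      linarith
    rw [e1, e2] at hfw
    have hconv' : L/2 * ‖x‖^2 - f x ≤ (1/(1+t)) * (L/2 * ‖w‖^2 - f w)
        + (t/(1+t)) * (L/2 * ‖y‖^2 - f y) := hconv
    rw [e3] at hconv'
    -- multiply hconv by (1+t)
    have hconv2 := mul_le_mul_of_nonneg_left hconv' h1t.le
    have hclear1 : (1+t) * (1/(1+t)) = 1 := by field_simp
    have hclear2 : (1+t) * (t/(1+t)) = t := by field_simp
    -- derive (1+t) * (L/2‖x‖² - f x) ≤ (L/2‖w‖²' - f w) + t*(L/2‖y‖² - f y)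
    have hconv3 : (1+t) * (L/2 * ‖x‖^2 - f x) ≤
        (L/2 * (‖x‖ ^ 2 - 2 * t * ⟪x, y - x⟫ + t^2 * ‖y - x‖ ^ 2) - f w)
        + t * (L/2 * ‖y‖^2 - f y) := by
      calc (1+t) * (L/2 * ‖x‖^2 - f x)
          ≤ (1+t) * ((1/(1+t)) * (L/2 * (‖x‖ ^ 2 - 2 * t * ⟪x, y - x⟫ + t^2 * ‖y - x‖ ^ 2) - f w)
            + (t/(1+t)) * (L/2 * ‖y‖^2 - f y)) := hconv2
        _ = ((1+t) * (1/(1+t))) * (L/2 * (‖x‖ ^ 2 - 2 * t * ⟪x, y - x⟫ + t^2 * ‖y - x‖ ^ 2) - f w)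
            + ((1+t) * (t/(1+t))) * (L/2 * ‖y‖^2 - f y) := by ring
        _ = _ := by rw [hclear1, hclear2]; ring
    rw [e4] at hconv3
    -- combine with hfw : f w ≥ f x + (-(t*⟪g,y-x⟫)) + μ/2*(t^2‖y-x‖²)
    have hty : t * f y ≤ t * (f x + ⟪g, y - x⟫ + L / 2 * ‖y - x‖ ^ 2 + t * ((L - μ) / 2 * ‖y - x‖ ^ 2)) := by
      nlinarith [hconv3, hfw]
    exact le_of_mul_le_mul_left (by linarith [hty]) ht
  refine le_of_forall_pos_le_add ?_
  intro ε hε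
  set C : ℝ := (L - μ) / 2 * ‖y - x‖ ^ 2 with hC
  have hC0 : 0 ≤ C := mul_nonneg (div_nonneg (by linarith) (by norm_num)) (sq_nonneg _)
  set t : ℝ := min 1 (ε / (C + 1)) with htdef
  have ht : 0 < t := lt_min one_pos (by positivity)
  have ht1 : t ≤ 1 := min_le_left _ _
  have h2 := key t ht ht1
  have htC : t * C ≤ ε := by
    have h3 : t ≤ ε / (C + 1) := min_le_right _ _
    have h4 : t * C ≤ (ε / (C + 1)) * C := by nlinarith
    have h5 : (ε / (C + 1)) * C ≤ ε := by
      rw [div_mul_eq_mul_div, div_le_iff₀ (by positivity)]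
      nlinarith
    linarith
  linarith

lemma interp' {μ L : ℝ} (hμL : μ < L) {f : H → ℝ} (hup : HasUpperCurvature L f)
    (x y gx gy : H) (hgx : IsSubgradient μ f x gx) (hgy : IsSubgradient μ f y gy) :
    2*(L-μ)*(f y - f x - ⟪gx, y - x⟫ - μ/2*‖y - x‖^2) ≥ ‖gx - gy - μ • (x - y)‖^2 := by
  have hΛ : 0 < L - μ := sub_pos.2 hμL
  set c : ℝ := (L - μ)⁻¹ with hcdef
  have hc : (L - μ) * c = 1 := mul_inv_cancel₀ hΛ.ne'
  set w : H := gy - gx - μ • (y - x) with hw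
  set z : H := y - c • w with hz
  have hlow := hgx z
  have hupb := upper_bound hμL hup hgy z
  have hzx : z - x = (y - x) - c • w := by rw [hz]; abel
  have hzy : z - y = -(c • w) := by rw [hz]; abel
  have e1 : ⟪gx, z - x⟫ = ⟪gx, y - x⟫ - c * ⟪gx, w⟫ := by
    rw [hzx, inner_sub_right, real_inner_smul_right]
  have e2 : ‖z - x‖^2 = ‖y - x‖^2 - 2*c*⟪y - x, w⟫ + c^2*‖w‖^2 := by
    rw [hzx, norm_sub_sq_real, real_inner_smul_right, norm_smul, mul_pow,
      Real.norm_eq_abs, sq_abs]; ring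
  have e3 : ⟪gy, z - y⟫ = -(c * ⟪gy, w⟫) := by
    rw [hzy, inner_neg_right, real_inner_smul_right]
  have e4 : ‖z - y‖^2 = c^2 * ‖w‖^2 := by
    rw [hzy, norm_neg, norm_smul, mul_pow, Real.norm_eq_abs, sq_abs]
  have e5 : ⟪gy, w⟫ - ⟪gx, w⟫ - μ * ⟪y - x, w⟫ = ‖w‖^2 := by
    have h1 : ⟪w, w⟫ = ⟪gy, w⟫ - ⟪gx, w⟫ - μ * ⟪y - x, w⟫ := by
      nth_rewrite 1 [hw]
      rw [inner_sub_left, inner_sub_left, real_inner_smul_left]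
    rw [← real_inner_self_eq_norm_sq, h1]
  have e6 : ‖gx - gy - μ • (x - y)‖^2 = ‖w‖^2 := by
    rw [show gx - gy - μ • (x - y) = -w from by rw [hw]; module, norm_neg]
  have key : f x + (⟪gx, y - x⟫ - c*⟪gx, w⟫)
      + μ/2*(‖y - x‖^2 - 2*c*⟪y - x, w⟫ + c^2*‖w‖^2)
      ≤ f y + (-(c*⟪gy, w⟫)) + L/2*(c^2*‖w‖^2) := by
    rw [← e1, ← e2, ← e3, ← e4]; exact le_trans hlow hupb
  rw [e6]
  have key2 : f y - f x - ⟪gx, y - x⟫ - μ/2*‖y - x‖^2 ≥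
      c*(⟪gy, w⟫ - ⟪gx, w⟫ - μ*⟪y - x, w⟫) - c^2*(L-μ)/2*‖w‖^2 := by nlinarith [key]
  rw [e5] at key2
  have key3 := mul_le_mul_of_nonneg_left key2 (by positivity : (0:ℝ) ≤ 2*(L-μ))
  have hsub : 2*(L-μ)*(c*‖w‖^2 - c^2*(L-μ)/2*‖w‖^2) = ‖w‖^2 := by
    calc 2*(L-μ)*(c*‖w‖^2 - c^2*(L-μ)/2*‖w‖^2)
        = (2*((L-μ)*c) - ((L-μ)*c)^2)*‖w‖^2 := by ring
      _ = ‖w‖^2 := by rw [hc]; ring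
  linarith [key3, hsub]

/-- one-step decrease, regime p8. -/
theorem dca_one_step_p8
    (mu1 mu2 L1 L2 : ℝ)
    (h1 : mu2 < L2) (h2 : L1 < mu2) (h3 : 0 < L1) (h4 : mu1 < L1)
    (h5 : 0 < mu1 + mu2)
    (h6 : mu1 / mu2 + 1 + mu1 / L1 ≥ 0)
    (f1 f2 : H → ℝ)
    (h1lo : HasLowerCurvature mu1 f1) (h1up : HasUpperCurvature L1 f1)
    (h2lo : HasLowerCurvature mu2 f2) (h2up : HasUpperCurvature L2 f2)
    (x xp g1 g2 : H)
    (hg2 : IsSubgradient mu2 f2 x g2) (hg1p : IsSubgradient mu1 f1 xp g2)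
    (hg1 : IsSubgradient mu1 f1 x g1) :
    (f1 x - f2 x) - (f1 xp - f2 xp) ≥
      (L1 + mu2) / L1 ^ 2 * ((1 : ℝ) / 2) * ‖g1 - g2‖ ^ 2 := by
  
  have hm2 : 0 < mu2 := h3.trans h2
  have hP : 0 < L1 - mu1 := sub_pos.2 h4
  have h6' : 0 ≤ mu1*L1 + mu1*mu2 + mu2*L1 := by
    have h := mul_nonneg (le_of_lt (mul_pos hm2 h3)) h6
    have heq : mu2*L1*(mu1/mu2 + 1 + mu1/L1) = mu1*L1 + mu2*L1 + mu1*mu2 := by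
      field_simp
    linarith [h, heq]
  have hQ1 := interp' h4 h1up x xp g1 g2 hg1 hg1p
  have hQ2 := interp' h4 h1up xp x g2 g1 hg1p hg1
  have hA := hg2 xp
  have hsq : (0:ℝ) ≤ ‖L1 • (x - xp) - (g1 - g2)‖^2 := sq_nonneg _
  have en : ‖xp - x‖^2 = ‖x - xp‖^2 := by rw [norm_sub_rev]
  have eg1 : ⟪g1, xp - x⟫ = -⟪g1 - g2, x - xp⟫ - ⟪g2, x - xp⟫ := by
    rw [show xp - x = -(x - xp) from by abel, inner_neg_right, inner_sub_left]; ring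
  have eg2 : ⟪g2, xp - x⟫ = -⟪g2, x - xp⟫ := by
    rw [show xp - x = -(x - xp) from by abel, inner_neg_right]
  have ew1 : ‖g1 - g2 - mu1 • (x - xp)‖^2
      = ‖g1 - g2‖^2 - 2*mu1*⟪g1 - g2, x - xp⟫ + mu1^2*‖x - xp‖^2 := by
    rw [norm_sub_sq_real, real_inner_smul_right, norm_smul, mul_pow,
      Real.norm_eq_abs, sq_abs]; ring
  have ew2 : ‖g2 - g1 - mu1 • (xp - x)‖^2
      = ‖g1 - g2‖^2 - 2*mu1*⟪g1 - g2, x - xp⟫ + mu1^2*‖x - xp‖^2 := by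
    rw [show g2 - g1 - mu1 • (xp - x) = -(g1 - g2 - mu1 • (x - xp)) from by module,
      norm_neg]
    exact ew1
  have esq : ‖L1 • (x - xp) - (g1 - g2)‖^2
      = L1^2*‖x - xp‖^2 - 2*L1*⟪g1 - g2, x - xp⟫ + ‖g1 - g2‖^2 := by
    rw [norm_sub_sq_real, real_inner_smul_left, norm_smul, Real.norm_eq_abs, mul_pow,
      sq_abs, real_inner_comm (x - xp) (g1 - g2)]; ring
  rw [en, eg1, ew1] at hQ1
  rw [ew2] at hQ2
  rw [eg2, en] at hA
  rw [esq] at hsq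
  have hpos : 0 < 2*L1^2*(L1-mu1) := by positivity
  have hs : 2*L1^2*(L1-mu1)*((f1 x - f2 x) - (f1 xp - f2 xp))
      ≥ (L1+mu2)*(L1-mu1)*‖g1 - g2‖^2 := by
    linarith [mul_nonneg (mul_nonneg hm2.le h3.le) (sub_nonneg.2 hQ1),
      mul_nonneg (by positivity : (0:ℝ) ≤ L1^2 + mu2*L1) (sub_nonneg.2 hQ2),
      mul_nonneg hpos.le (sub_nonneg.2 hA),
      mul_nonneg h6' hsq]
  have hrw : (L1 + mu2)/L1^2*((1:ℝ)/2)*‖g1 - g2‖^2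
      = ((L1+mu2)*(L1-mu1)*‖g1 - g2‖^2)/(2*L1^2*(L1-mu1)) := by
    field_simp
  rw [ge_iff_le, hrw, div_le_iff₀ hpos]
  linarith [hs]
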